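/- Let 0 ≤ p ≤ 1 and let s, t be positive integers. Let μ be the infinite product of Bernoulli(p) measures on sequences ω : ℕ → {0,1}, and define the stopping time Y(ω) as the smallest n such that either ∑_{i<n} ω_i = s or ∑_{i<n} (1 - ω_i) = t. Fix nonnegative integers s' < s and t' < t with m = s' + t', and let A be the event that among the first m coordinates exactly s' equal 1 (hence exactly t' equal 0). Then for every integer k, the conditional probability μ(Y = m + k | A) equals the SNB(p, s - s', t - t') probability mass at k, namely C(k-1, s-s'-1) p^{s-s'} (1-p)^{k-(s-s')} · 1{s-s' ≤ k ≤ (s-s')+(t-t')-1} + C(k-1, t-t'-1) p^{k-(t-t')} (1-p)^{t-t'} · 1{t-t' ≤ k ≤ (s-s')+(t-t')-1}. -/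

import Mathlib

open MeasureTheory ProbabilityTheory

/-- Number of successes (coordinates equal to 1/true) among the first `n` coordinates. -/
def numSuccesses (ω : ℕ → Bool) (n : ℕ) : ℕ :=
  ((Finset.range n).filter fun i => ω i = true).card

/-- Number of failures (coordinates equal to 0/false) among the first `n` coordinates. -/
def numFailures (ω : ℕ → Bool) (n : ℕ) : ℕ :=
  ((Finset.range n).filter fun i => ω i = false).card

/-- The stopping time: the smallest `n` such that among the first `n` coordinates
there are either `s` successes or `t` failures. -/
noncomputable def snbStop (s t : ℕ) (ω : ℕ → Bool) : ℕ :=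
  sInf {n | numSuccesses ω n = s ∨ numFailures ω n = t}



section SNBAux

open Finset

lemma numSuccesses_zero (ω : ℕ → Bool) : numSuccesses ω 0 = 0 := by
  simp [numSuccesses]

lemma numFailures_zero (ω : ℕ → Bool) : numFailures ω 0 = 0 := by
  simp [numFailures]

lemma numSuccesses_succ (ω : ℕ → Bool) (n : ℕ) :
    numSuccesses ω (n+1) = numSuccesses ω n + (if ω n then 1 else 0) := by
  simp only [numSuccesses, Finset.range_add_one, Finset.filter_insert]
  by_cases h : ω n <;> simp [h, Finset.card_insert_of_notMem]

lemma numFailures_succ (ω : ℕ → Bool) (n : ℕ) :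
    numFailures ω (n+1) = numFailures ω n + (if ω n then 0 else 1) := by
  simp only [numFailures, Finset.range_add_one, Finset.filter_insert]
  by_cases h : ω n <;> simp [h, Finset.card_insert_of_notMem]

lemma numSuccesses_add_numFailures (ω : ℕ → Bool) (n : ℕ) :
    numSuccesses ω n + numFailures ω n = n := by
  induction n with
  | zero => simp [numSuccesses_zero, numFailures_zero]
  | succ n ih =>
    rw [numSuccesses_succ, numFailures_succ]
    by_cases h : ω n <;> simp [h] <;> omega

lemma numSuccesses_mono (ω : ℕ → Bool) : Monotone (numSuccesses ω) := by
  intro a b hab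
  exact Finset.card_le_card (Finset.filter_subset_filter _ (by simpa using Finset.range_subset_range.2 hab))

lemma numFailures_mono (ω : ℕ → Bool) : Monotone (numFailures ω) := by
  intro a b hab
  exact Finset.card_le_card (Finset.filter_subset_filter _ (by simpa using Finset.range_subset_range.2 hab))

lemma numSuccesses_le (ω : ℕ → Bool) (n : ℕ) : numSuccesses ω n ≤ n := by
  have := numSuccesses_add_numFailures ω n; omega

lemma numFailures_le (ω : ℕ → Bool) (n : ℕ) : numFailures ω n ≤ n := by
  have := numSuccesses_add_numFailures ω n; omega

/-- discrete IVT -/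
lemma exists_eq_of_steps (f : ℕ → ℕ) (h0 : f 0 = 0) (hstep : ∀ n, f (n+1) ≤ f n + 1)
    {c N : ℕ} (h : c ≤ f N) : ∃ j ≤ N, f j = c := by
  induction N with
  | zero => exact ⟨0, le_refl _, by omega⟩
  | succ N ih =>
    by_cases hc : c ≤ f N
    · obtain ⟨j, hj, hj'⟩ := ih hc
      exact ⟨j, by omega, hj'⟩
    · have := hstep N
      exact ⟨N+1, le_refl _, by omega⟩

lemma stopSet_nonempty {s t : ℕ} (hs : 0 < s) (ht : 0 < t) (ω : ℕ → Bool) :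
    {n | numSuccesses ω n = s ∨ numFailures ω n = t}.Nonempty := by
  have hsum := numSuccesses_add_numFailures ω (s + t)
  rcases le_or_gt s (numSuccesses ω (s+t)) with h | h
  · obtain ⟨j, _, hj⟩ := exists_eq_of_steps (numSuccesses ω) (numSuccesses_zero ω)
      (fun n => by rw [numSuccesses_succ]; split <;> omega) h
    exact ⟨j, Or.inl hj⟩
  · obtain ⟨j, _, hj⟩ := exists_eq_of_steps (numFailures ω) (numFailures_zero ω)
      (fun n => by rw [numFailures_succ]; split <;> omega) (N := s + t) (c := t) (by omega)
    exact ⟨j, Or.inr hj⟩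

lemma snbStop_eq_iff {s t : ℕ} (hs : 0 < s) (ht : 0 < t) (ω : ℕ → Bool) (n : ℕ) :
    snbStop s t ω = n ↔ ((numSuccesses ω n = s ∨ numFailures ω n = t) ∧
      ∀ j < n, ¬(numSuccesses ω j = s ∨ numFailures ω j = t)) := by
  simp only [snbStop]
  constructor
  · rintro rfl
    have hne := stopSet_nonempty hs ht ω
    refine ⟨Nat.sInf_mem hne, fun j hj hmem => ?_⟩
    have := Nat.sInf_le (s := {n | numSuccesses ω n = s ∨ numFailures ω n = t}) hmem
    omega
  · rintro ⟨h1, h2⟩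
    have hle : sInf {n | numSuccesses ω n = s ∨ numFailures ω n = t} ≤ n := Nat.sInf_le h1
    have hmem := Nat.sInf_mem (stopSet_nonempty hs ht ω)
    rcases lt_or_eq_of_le hle with hlt | heq
    · exact absurd hmem (h2 _ hlt)
    · exact heq

lemma snbStop_eq_iff_closed {s t : ℕ} (hs : 0 < s) (ht : 0 < t) (ω : ℕ → Bool) (k : ℕ) :
    snbStop s t ω = k ↔
      ((s ≤ k ∧ k ≤ s + t - 1 ∧ numSuccesses ω k = s ∧ ω (k-1) = true) ∨
       (t ≤ k ∧ k ≤ s + t - 1 ∧ numFailures ω k = t ∧ ω (k-1) = false)) := by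
  rw [snbStop_eq_iff hs ht]
  constructor
  · rintro ⟨h1, h2⟩
    have hk0 : k ≠ 0 := by
      rintro rfl
      rw [numSuccesses_zero, numFailures_zero] at h1
      omega
    obtain ⟨k0, rfl⟩ : ∃ k0, k = k0 + 1 := ⟨k - 1, by omega⟩
    have hS := numSuccesses_succ ω k0
    have hF := numFailures_succ ω k0
    have hsum := numSuccesses_add_numFailures ω (k0+1)
    have hnot := h2 k0 (by omega)
    push_neg at hnot
    rcases h1 with h1 | h1
    · -- success stop
      have hu : ω k0 = true := by
        by_contra hu
        simp only [Bool.not_eq_true] at hu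
        rw [hu] at hS; simp at hS; omega
      rw [hu] at hS hF; simp at hS hF
      refine Or.inl ⟨by have := numSuccesses_le ω (k0+1); omega, ?_, h1, by simpa using hu⟩
      -- k ≤ s + t - 1
      by_contra hbig
      have hFk : t ≤ numFailures ω (k0+1) := by omega
      obtain ⟨j, hj, hj'⟩ := exists_eq_of_steps (numFailures ω) (numFailures_zero ω)
        (fun n => by rw [numFailures_succ]; split <;> omega) hFk
      rcases lt_or_eq_of_le hj with hlt | heq
      · exact (h2 j hlt) (Or.inr hj')
      · rw [heq] at hj'; omega
    · -- failure stop
      have hu : ω k0 = false := by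
        by_contra hu
        simp only [Bool.not_eq_false] at hu
        rw [hu] at hF; simp at hF; omega
      rw [hu] at hS hF; simp at hS hF
      refine Or.inr ⟨by have := numFailures_le ω (k0+1); omega, ?_, h1, by simpa using hu⟩
      by_contra hbig
      have hSk : s ≤ numSuccesses ω (k0+1) := by omega
      obtain ⟨j, hj, hj'⟩ := exists_eq_of_steps (numSuccesses ω) (numSuccesses_zero ω)
        (fun n => by rw [numSuccesses_succ]; split <;> omega) hSk
      rcases lt_or_eq_of_le hj with hlt | heq
      · exact (h2 j hlt) (Or.inl hj')
      · rw [heq] at hj'; omega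
  · rintro (⟨hsk, hkb, hcount, hlast⟩ | ⟨htk, hkb, hcount, hlast⟩)
    · have hk0 : k ≠ 0 := by omega
      obtain ⟨k0, rfl⟩ : ∃ k0, k = k0 + 1 := ⟨k - 1, by omega⟩
      have hS := numSuccesses_succ ω k0
      simp only [Nat.add_sub_cancel] at hlast
      rw [hlast] at hS; simp at hS
      have hsum := numSuccesses_add_numFailures ω (k0+1)
      refine ⟨Or.inl hcount, fun j hj => ?_⟩
      rintro (hj' | hj')
      · have h1 : numSuccesses ω j ≤ numSuccesses ω k0 := numSuccesses_mono ω (by omega)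
        omega
      · have h1 : numFailures ω j ≤ numFailures ω (k0+1) := numFailures_mono ω (by omega)
        omega
    · have hk0 : k ≠ 0 := by omega
      obtain ⟨k0, rfl⟩ : ∃ k0, k = k0 + 1 := ⟨k - 1, by omega⟩
      have hF := numFailures_succ ω k0
      simp only [Nat.add_sub_cancel] at hlast
      rw [hlast] at hF; simp at hF
      have hsum := numSuccesses_add_numFailures ω (k0+1)
      refine ⟨Or.inr hcount, fun j hj => ?_⟩
      rintro (hj' | hj')
      · have h1 : numSuccesses ω j ≤ numSuccesses ω (k0+1) := numSuccesses_mono ω (by omega)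
        omega
      · have h1 : numFailures ω j ≤ numFailures ω k0 := numFailures_mono ω (by omega)
        omega

lemma numSuccesses_shift (ω : ℕ → Bool) (m i : ℕ) :
    numSuccesses ω (m + i) = numSuccesses ω m + numSuccesses (fun j => ω (m + j)) i := by
  induction i with
  | zero => simp [numSuccesses_zero]
  | succ i ih =>
    rw [← Nat.add_assoc, numSuccesses_succ, ih, numSuccesses_succ]
    ring

lemma numFailures_shift (ω : ℕ → Bool) (m i : ℕ) :
    numFailures ω (m + i) = numFailures ω m + numFailures (fun j => ω (m + j)) i := by
  induction i with
  | zero => simp [numFailures_zero]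
  | succ i ih =>
    rw [← Nat.add_assoc, numFailures_succ, ih, numFailures_succ]
    ring

lemma snbStop_shift {s t s' t' m : ℕ} (hs' : s' < s) (ht' : t' < t) (hm : m = s' + t')
    {ω : ℕ → Bool} (hA : numSuccesses ω m = s') (k : ℕ) :
    snbStop s t ω = m + k ↔ snbStop (s - s') (t - t') (fun j => ω (m + j)) = k := by
  have hFm : numFailures ω m = t' := by
    have := numSuccesses_add_numFailures ω m; omega
  rw [snbStop_eq_iff (by omega) (by omega), snbStop_eq_iff (by omega : 0 < s - s') (by omega : 0 < t - t')]
  constructor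
  · rintro ⟨h1, h2⟩
    constructor
    · rw [numSuccesses_shift ω m k, hA] at h1
      rw [numFailures_shift ω m k, hFm] at h1
      omega
    · intro i hi hcon
      refine h2 (m + i) (by omega) ?_
      rw [numSuccesses_shift ω m i, hA, numFailures_shift ω m i, hFm]
      omega
  · rintro ⟨h1, h2⟩
    constructor
    · rw [numSuccesses_shift ω m k, hA, numFailures_shift ω m k, hFm]
      omega
    · intro j hj hcon
      rcases le_or_gt m j with hmj | hmj
      · obtain ⟨i, rfl⟩ := Nat.exists_eq_add_of_le hmj
        rw [numSuccesses_shift ω m i, hA, numFailures_shift ω m i, hFm] at hcon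
        exact h2 i (by omega) (by omega)
      · have h1 : numSuccesses ω j ≤ s' := hA ▸ numSuccesses_mono ω (by omega)
        have h2' : numFailures ω j ≤ t' := hFm ▸ numFailures_mono ω (by omega)
        omega

/-! ### Cylinder measure machinery -/

def cnt {n : ℕ} (u : Bool) (b : Fin n → Bool) : ℕ :=
  (Finset.univ.filter fun i => b i = u).card

lemma numSuccesses_eq_cnt (ω : ℕ → Bool) (n : ℕ) :
    numSuccesses ω n = cnt true (fun i : Fin n => ω i) := by
  simp only [numSuccesses, cnt, Finset.card_filter]
  rw [← Fin.sum_univ_eq_sum_range (fun i => if ω i = true then 1 else 0) n]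

lemma numFailures_eq_cnt (ω : ℕ → Bool) (n : ℕ) :
    numFailures ω n = cnt false (fun i : Fin n => ω i) := by
  simp only [numFailures, cnt, Finset.card_filter]
  rw [← Fin.sum_univ_eq_sum_range (fun i => if ω i = false then 1 else 0) n]

lemma cnt_true_add_cnt_false {n : ℕ} (b : Fin n → Bool) : cnt true b + cnt false b = n := by
  classical
  simp only [cnt, Finset.card_filter, ← Finset.sum_add_distrib]
  have h : ∀ i : Fin n, ((if b i = true then 1 else 0) + (if b i = false then 1 else 0)) = 1 := by
    intro i; cases hbi : b i <;> simp
  simp [h]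

noncomputable def cylWeight (p : ℝ) {n : ℕ} (b : Fin n → Bool) : ℝ :=
  ∏ i, (if b i then p else 1 - p)

lemma cylWeight_eq (p : ℝ) {n : ℕ} (b : Fin n → Bool) :
    cylWeight p b = p ^ (cnt true b) * (1 - p) ^ (cnt false b) := by
  classical
  rw [cylWeight, ← Finset.prod_filter_mul_prod_filter_not Finset.univ (fun i => b i = true)]
  congr 1
  · rw [Finset.prod_congr rfl (g := fun _ => p) (fun i hi => by
      simp only [Finset.mem_filter] at hi; simp [hi.2]), Finset.prod_const]
    rfl
  · rw [Finset.prod_congr rfl (g := fun _ => 1 - p) (fun i hi => by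
      simp only [Finset.mem_filter, Bool.not_eq_true] at hi; simp [hi.2]), Finset.prod_const]
    congr 1
    simp only [cnt]
    congr 1
    ext i
    simp [Bool.not_eq_true]

lemma cylWeight_nonneg {p : ℝ} (hp0 : 0 ≤ p) (hp1 : p ≤ 1) {n : ℕ} (b : Fin n → Bool) :
    0 ≤ cylWeight p b := Finset.prod_nonneg fun i _ => by split <;> [exact hp0; linarith]

lemma measurable_cylinder {n : ℕ} (S : Set (Fin n → Bool)) :
    MeasurableSet {ω : ℕ → Bool | (fun i : Fin n => ω (i : ℕ)) ∈ S} := by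
  have : Measurable (fun (ω : ℕ → Bool) (i : Fin n) => ω (i : ℕ)) :=
    measurable_pi_lambda _ fun i => measurable_pi_apply _
  exact this (MeasurableSet.of_discrete (s := S))

lemma measure_cyl {p : ℝ} (hp0 : 0 ≤ p) (hp1 : p ≤ 1) (μ : Measure (ℕ → Bool))
    (hμ : ∀ (n : ℕ) (b : Fin n → Bool),
      μ {ω | ∀ i : Fin n, ω (i : ℕ) = b i} =
        ∏ i : Fin n, ENNReal.ofReal (if b i then p else 1 - p))
    {n : ℕ} (S : Finset (Fin n → Bool)) :
    μ {ω | (fun i : Fin n => ω (i : ℕ)) ∈ S} =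
      ∑ b ∈ S, ENNReal.ofReal (cylWeight p b) := by
  classical
  have hset : {ω : ℕ → Bool | (fun i : Fin n => ω (i : ℕ)) ∈ S} =
      ⋃ b ∈ S, {ω : ℕ → Bool | ∀ i : Fin n, ω (i : ℕ) = b i} := by
    ext ω
    simp only [Set.mem_setOf_eq, Set.mem_iUnion]
    constructor
    · intro h
      exact ⟨_, h, fun i => rfl⟩
    · rintro ⟨b, hb, h⟩
      have : (fun i : Fin n => ω (i : ℕ)) = b := funext h
      rwa [this]
  rw [hset, measure_biUnion_finset]
  · refine Finset.sum_congr rfl fun b _ => ?_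
    rw [hμ n b]
    exact (ENNReal.ofReal_prod_of_nonneg (fun i _ => by
      split <;> linarith)).symm
  · intro b hb b' hb' hne
    simp only [Function.onFun]
    rw [Set.disjoint_left]
    intro ω h1 h2
    exact hne (funext fun i => (h1 i).symm.trans (h2 i))
  · intro b hb
    have : {ω : ℕ → Bool | ∀ i : Fin n, ω (i : ℕ) = b i} =
        ⋂ i : Fin n, (fun ω : ℕ → Bool => ω (i : ℕ)) ⁻¹' {b i} := by
      ext ω; simp [Set.mem_iInter]
    rw [this]
    exact MeasurableSet.iInter fun i => (measurable_pi_apply _) (measurableSet_singleton _)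

/-! ### Counting -/

lemma card_cnt_eq (n c : ℕ) (u : Bool) [DecidableEq (Fin n → Bool)] :
    (Finset.univ.filter fun b : Fin n → Bool => cnt u b = c).card = n.choose c := by
  classical
  have hp : (Finset.powersetCard c (Finset.univ : Finset (Fin n))).card = n.choose c := by
    simp [Finset.card_powersetCard]
  rw [← hp]
  · apply Finset.card_bij (fun b _ => Finset.univ.filter fun i => b i = u)
    · intro b hb
      simp only [Finset.mem_filter, Finset.mem_univ, true_and] at hb
      simp only [Finset.mem_powersetCard]
      exact ⟨Finset.filter_subset _ _ |>.trans (by simp), hb⟩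
    · intro b hb b' hb' heq
      funext i
      have := Finset.ext_iff.1 heq i
      simp only [Finset.mem_filter, Finset.mem_univ, true_and] at this
      cases hbi : b i <;> cases hbi' : b' i <;> cases u <;> simp_all
    · intro S hS
      simp only [Finset.mem_powersetCard] at hS
      refine ⟨fun i => if i ∈ S then u else !u, ?_, ?_⟩
      · simp only [Finset.mem_filter, Finset.mem_univ, true_and]; simp only [cnt]
        rw [show (Finset.univ.filter fun i => (if i ∈ S then u else !u) = u) = S by
          ext i; by_cases hi : i ∈ S <;> simp [hi]]
        exact hS.2
      · ext i; by_cases hi : i ∈ S <;> simp [hi]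

lemma cnt_snoc {k : ℕ} (u x : Bool) (w : Fin k → Bool) :
    cnt u (Fin.snoc w x) = cnt u w + (if x = u then 1 else 0) := by
  classical
  simp only [cnt, Finset.card_filter]
  rw [Fin.sum_univ_castSucc]
  simp [Fin.snoc_castSucc, Fin.snoc_last]

lemma card_cnt_last_eq (k c : ℕ) (hc : 0 < c) (u : Bool) [DecidableEq (Fin (k+1) → Bool)] :
    (Finset.univ.filter fun b : Fin (k+1) → Bool => b (Fin.last k) = u ∧ cnt u b = c).card
      = k.choose (c-1) := by
  classical
  rw [← card_cnt_eq k (c-1) u]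
  apply Finset.card_bij (fun b _ => fun i : Fin k => b i.castSucc)
  · intro b hb
    simp only [Finset.mem_filter, Finset.mem_univ, true_and] at hb ⊢
    have hsnoc : b = Fin.snoc (fun i : Fin k => b i.castSucc) (b (Fin.last k)) := by
      funext i
      rcases Fin.eq_castSucc_or_eq_last i with ⟨j, rfl⟩ | rfl
      · simp
      · simp
    have := hb.2
    rw [hsnoc, cnt_snoc, hb.1] at this
    simp at this
    omega
  · intro b hb b' hb' heq
    simp only [Finset.mem_filter, Finset.mem_univ, true_and] at hb hb'
    funext i
    rcases Fin.eq_castSucc_or_eq_last i with ⟨j, rfl⟩ | rfl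
    · exact congrFun heq j
    · rw [hb.1, hb'.1]
  · intro w hw
    simp only [Finset.mem_filter, Finset.mem_univ, true_and] at hw
    refine ⟨Fin.snoc w u, ?_, ?_⟩
    · simp only [Finset.mem_filter, Finset.mem_univ, true_and, Fin.snoc_last, cnt_snoc, hw,
        if_pos rfl]
      simp only [if_true]
      omega
    · funext i; simp

/-! ### Product splitting -/

lemma cylWeight_append (p : ℝ) {m k : ℕ} (x : Fin m → Bool) (y : Fin k → Bool) :
    cylWeight p (Fin.append x y) = cylWeight p x * cylWeight p y := by
  rw [cylWeight, Fin.prod_univ_add]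
  congr 1
  · exact Finset.prod_congr rfl fun i _ => by rw [Fin.append_left]
  · exact Finset.prod_congr rfl fun i _ => by rw [Fin.append_right]

lemma measure_cyl_prod {p : ℝ} (hp0 : 0 ≤ p) (hp1 : p ≤ 1) (μ : Measure (ℕ → Bool))
    (hμ : ∀ (n : ℕ) (b : Fin n → Bool),
      μ {ω | ∀ i : Fin n, ω (i : ℕ) = b i} =
        ∏ i : Fin n, ENNReal.ofReal (if b i then p else 1 - p))
    {m k : ℕ} (SA : Finset (Fin m → Bool)) (W : Finset (Fin k → Bool)) :
    μ {ω | (fun i : Fin m => ω (i : ℕ)) ∈ SA ∧ (fun j : Fin k => ω (m + (j : ℕ))) ∈ W} =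
      (∑ x ∈ SA, ENNReal.ofReal (cylWeight p x)) *
      (∑ y ∈ W, ENNReal.ofReal (cylWeight p y)) := by
  classical
  set T : Finset (Fin (m + k) → Bool) := Finset.univ.filter
    fun b => ((fun i : Fin m => b (Fin.castAdd k i)) ∈ SA ∧
              (fun j : Fin k => b (Fin.natAdd m j)) ∈ W) with hT
  have hset : {ω : ℕ → Bool | (fun i : Fin m => ω (i : ℕ)) ∈ SA ∧
      (fun j : Fin k => ω (m + (j : ℕ))) ∈ W} =
      {ω : ℕ → Bool | (fun l : Fin (m + k) => ω (l : ℕ)) ∈ T} := by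
    ext ω
    simp only [Set.mem_setOf_eq, hT, Finset.mem_filter, Finset.mem_univ, true_and]
    rfl
  rw [hset, measure_cyl hp0 hp1 μ hμ T]
  rw [Finset.sum_mul_sum, ← Finset.sum_product']
  apply Finset.sum_nbij' (fun b => ((fun i : Fin m => b (Fin.castAdd k i)),
      (fun j : Fin k => b (Fin.natAdd m j)))) (fun z => Fin.append z.1 z.2)
  · intro b hb
    simp only [hT, Finset.mem_filter, Finset.mem_univ, true_and] at hb
    exact Finset.mem_product.2 hb
  · intro z hz
    simp only [Finset.mem_product] at hz
    simp only [hT, Finset.mem_filter, Finset.mem_univ, true_and]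
    constructor
    · convert hz.1 using 2
      exact Fin.append_left _ _ _
    · convert hz.2 using 2
      exact Fin.append_right _ _ _
  · intro b hb
    exact Fin.append_castAdd_natAdd
  · intro z hz
    ext
    · exact Fin.append_left _ _ _
    · exact Fin.append_right _ _ _
  · intro b hb
    conv_lhs => rw [← Fin.append_castAdd_natAdd (f := b)]
    rw [cylWeight_append, ENNReal.ofReal_mul (cylWeight_nonneg hp0 hp1 _)]

end SNBAux

/-- Let `μ` be the infinite product of Bernoulli(p) measures on sequences
`ω : ℕ → {0,1}` (characterized by its values on cylinder sets).  Conditionally on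
the event `A` that exactly `s'` of the first `m = s' + t'` coordinates equal 1
(hence exactly `t'` equal 0), the additional number of coordinates
`Y - m` needed to reach `s` successes or `t` failures is distributed as
SNB(p, s - s', t - t'). -/
theorem snb_stoppingTime_conditional (p : ℝ) (hp0 : 0 ≤ p) (hp1 : p ≤ 1)
    (s t : ℕ) (hs : 0 < s) (ht : 0 < t)
    (s' t' m : ℕ) (hs' : s' < s) (ht' : t' < t) (hm : m = s' + t')
    (μ : Measure (ℕ → Bool)) [IsProbabilityMeasure μ]
    (hμ : ∀ (n : ℕ) (b : Fin n → Bool),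
      μ {ω | ∀ i : Fin n, ω (i : ℕ) = b i} =
        ∏ i : Fin n, ENNReal.ofReal (if b i then p else 1 - p))
    (A : Set (ℕ → Bool)) (hA : A = {ω | numSuccesses ω m = s'}) (hA0 : μ A ≠ 0)
    (k : ℕ) :
    μ[|A] {ω | snbStop s t ω = m + k} =
      ENNReal.ofReal
        ((if s - s' ≤ k ∧ k ≤ (s - s') + (t - t') - 1 then
            (Nat.choose (k - 1) (s - s' - 1) : ℝ) * p ^ (s - s') *
              (1 - p) ^ (k - (s - s')) else 0) +
         (if t - t' ≤ k ∧ k ≤ (s - s') + (t - t') - 1 then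
            (Nat.choose (k - 1) (t - t' - 1) : ℝ) * p ^ (k - (t - t')) *
              (1 - p) ^ (t - t') else 0)) := by
  classical
  have hq0 : (0:ℝ) ≤ 1 - p := by linarith
  have hAmeas : MeasurableSet A := by
    rw [hA]
    have hset : {ω : ℕ → Bool | numSuccesses ω m = s'} =
        {ω : ℕ → Bool | (fun i : Fin m => ω (i : ℕ)) ∈
          ({x : Fin m → Bool | cnt true x = s'} : Set (Fin m → Bool))} := by
      ext ω
      simp [numSuccesses_eq_cnt]
    rw [hset]
    exact measurable_cylinder _
  rw [ProbabilityTheory.cond_apply hAmeas]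
  rcases k with _ | k0
  · -- k = 0
    have hempty : A ∩ {ω | snbStop s t ω = m + 0} = ∅ := by
      ext ω
      simp only [Set.mem_inter_iff, Set.mem_setOf_eq, Set.mem_empty_iff_false, iff_false, hA]
      rintro ⟨h1, h2⟩
      rw [Nat.add_zero, snbStop_eq_iff hs ht] at h2
      have hF : numFailures ω m = t' := by
        have := numSuccesses_add_numFailures ω m; omega
      rcases h2.1 with h | h <;> omega
    rw [hempty]
    have c1 : ¬ (s - s' ≤ 0 ∧ 0 ≤ (s - s') + (t - t') - 1) := by omega
    have c2 : ¬ (t - t' ≤ 0 ∧ 0 ≤ (s - s') + (t - t') - 1) := by omega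
    rw [if_neg c1, if_neg c2]
    simp
  · -- k = k0 + 1
    set k := k0 + 1 with hk
    set SA : Finset (Fin m → Bool) := Finset.univ.filter (fun x => cnt true x = s') with hSA
    set W : Finset (Fin k → Bool) := Finset.univ.filter (fun y =>
      (s - s' ≤ k ∧ k ≤ (s - s') + (t - t') - 1 ∧ cnt true y = s - s' ∧
        y (Fin.last k0) = true) ∨
      (t - t' ≤ k ∧ k ≤ (s - s') + (t - t') - 1 ∧ cnt false y = t - t' ∧
        y (Fin.last k0) = false)) with hW
    have hAeq : A = {ω | (fun i : Fin m => ω (i : ℕ)) ∈ SA} := by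
      rw [hA]
      ext ω
      simp [hSA, numSuccesses_eq_cnt]
    have hABeq : A ∩ {ω | snbStop s t ω = m + k} =
        {ω | (fun i : Fin m => ω (i : ℕ)) ∈ SA ∧ (fun j : Fin k => ω (m + (j : ℕ))) ∈ W} := by
      ext ω
      simp only [Set.mem_inter_iff, Set.mem_setOf_eq, hA]
      constructor
      · rintro ⟨h1, h2⟩
        refine ⟨by simp [hSA, ← numSuccesses_eq_cnt, h1], ?_⟩
        rw [snbStop_shift hs' ht' hm h1,
          snbStop_eq_iff_closed (by omega) (by omega)] at h2
        simp only [hW, Finset.mem_filter, Finset.mem_univ, true_and]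
        rw [numSuccesses_eq_cnt, numFailures_eq_cnt] at h2
        simpa [Fin.last, hk] using h2
      · rintro ⟨h1, h2⟩
        have h1' : numSuccesses ω m = s' := by
          rw [numSuccesses_eq_cnt]
          simpa [hSA] using h1
        refine ⟨h1', ?_⟩
        rw [snbStop_shift hs' ht' hm h1',
          snbStop_eq_iff_closed (by omega) (by omega)]
        simp only [hW, Finset.mem_filter, Finset.mem_univ, true_and] at h2
        rw [numSuccesses_eq_cnt, numFailures_eq_cnt]
        simpa [Fin.last, hk] using h2
    have hμA : μ A = ∑ b ∈ SA, ENNReal.ofReal (cylWeight p b) := by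
      rw [hAeq]; exact measure_cyl hp0 hp1 μ hμ SA
    rw [hABeq, measure_cyl_prod hp0 hp1 μ hμ SA W, hAeq, measure_cyl hp0 hp1 μ hμ SA,
      ← mul_assoc, ENNReal.inv_mul_cancel (hμA ▸ hA0) (hμA ▸ measure_ne_top μ A), one_mul]
    -- now compute the window sum
    rw [hW, Finset.filter_or, Finset.sum_union (by
      rw [Finset.disjoint_left]
      intro y h1 h2
      simp only [Finset.mem_filter, Finset.mem_univ, true_and] at h1 h2
      rw [h1.2.2.2] at h2
      exact absurd h2.2.2.2 (by simp))]
    have hsum1 : ∑ y ∈ Finset.univ.filter (fun y : Fin k → Bool =>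
        s - s' ≤ k ∧ k ≤ (s - s') + (t - t') - 1 ∧ cnt true y = s - s' ∧
          y (Fin.last k0) = true), ENNReal.ofReal (cylWeight p y) =
        if s - s' ≤ k ∧ k ≤ (s - s') + (t - t') - 1 then
          ENNReal.ofReal ((Nat.choose (k - 1) (s - s' - 1) : ℝ) * p ^ (s - s') *
            (1 - p) ^ (k - (s - s'))) else 0 := by
      by_cases hcond : s - s' ≤ k ∧ k ≤ (s - s') + (t - t') - 1
      · rw [if_pos hcond]
        have hfe : Finset.univ.filter (fun y : Fin k → Bool =>
            s - s' ≤ k ∧ k ≤ (s - s') + (t - t') - 1 ∧ cnt true y = s - s' ∧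
              y (Fin.last k0) = true) =
            Finset.univ.filter (fun y : Fin k → Bool =>
              y (Fin.last k0) = true ∧ cnt true y = s - s') := by
          ext y
          simp only [Finset.mem_filter, Finset.mem_univ, true_and]
          constructor
          · rintro ⟨_, _, h3, h4⟩; exact ⟨h4, h3⟩
          · rintro ⟨h4, h3⟩; exact ⟨hcond.1, hcond.2, h3, h4⟩
        rw [hfe, Finset.sum_eq_card_nsmul (b := ENNReal.ofReal
            (p ^ (s - s') * (1 - p) ^ (k - (s - s')))) (fun y hy => ?_),
          card_cnt_last_eq k0 (s - s') (by omega) true, nsmul_eq_mul]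
        · conv_rhs => rw [mul_assoc, ENNReal.ofReal_mul (by positivity), ENNReal.ofReal_natCast]
          rw [show k - 1 = k0 from rfl]
        · simp only [Finset.mem_filter, Finset.mem_univ, true_and] at hy
          have hc := cnt_true_add_cnt_false y
          rw [cylWeight_eq, hy.2, show cnt false y = k - (s - s') from by omega]
      · rw [if_neg hcond, Finset.filter_false_of_mem (fun y _ hy => hcond ⟨hy.1, hy.2.1⟩),
          Finset.sum_empty]
    have hsum2 : ∑ y ∈ Finset.univ.filter (fun y : Fin k → Bool =>
        t - t' ≤ k ∧ k ≤ (s - s') + (t - t') - 1 ∧ cnt false y = t - t' ∧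
          y (Fin.last k0) = false), ENNReal.ofReal (cylWeight p y) =
        if t - t' ≤ k ∧ k ≤ (s - s') + (t - t') - 1 then
          ENNReal.ofReal ((Nat.choose (k - 1) (t - t' - 1) : ℝ) * p ^ (k - (t - t')) *
            (1 - p) ^ (t - t')) else 0 := by
      by_cases hcond : t - t' ≤ k ∧ k ≤ (s - s') + (t - t') - 1
      · rw [if_pos hcond]
        have hfe : Finset.univ.filter (fun y : Fin k → Bool =>
            t - t' ≤ k ∧ k ≤ (s - s') + (t - t') - 1 ∧ cnt false y = t - t' ∧
              y (Fin.last k0) = false) =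
            Finset.univ.filter (fun y : Fin k → Bool =>
              y (Fin.last k0) = false ∧ cnt false y = t - t') := by
          ext y
          simp only [Finset.mem_filter, Finset.mem_univ, true_and]
          constructor
          · rintro ⟨_, _, h3, h4⟩; exact ⟨h4, h3⟩
          · rintro ⟨h4, h3⟩; exact ⟨hcond.1, hcond.2, h3, h4⟩
        rw [hfe, Finset.sum_eq_card_nsmul (b := ENNReal.ofReal
            (p ^ (k - (t - t')) * (1 - p) ^ (t - t'))) (fun y hy => ?_),
          card_cnt_last_eq k0 (t - t') (by omega) false, nsmul_eq_mul]
        · conv_rhs => rw [mul_assoc, ENNReal.ofReal_mul (by positivity), ENNReal.ofReal_natCast]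
          rw [show k - 1 = k0 from rfl]
        · simp only [Finset.mem_filter, Finset.mem_univ, true_and] at hy
          have hc := cnt_true_add_cnt_false y
          rw [cylWeight_eq, hy.2, show cnt true y = k - (t - t') from by omega]
      · rw [if_neg hcond, Finset.filter_false_of_mem (fun y _ hy => hcond ⟨hy.1, hy.2.1⟩),
          Finset.sum_empty]
    rw [hsum1, hsum2]
    rw [ENNReal.ofReal_add (by positivity) (by positivity)]
    congr 1 <;> split <;> simp
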